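/- Let V = H ⊕ W be a direct sum decomposition of a finite-dimensional real vector space, ω a skew-symmetric bilinear form on H, and π a skew-symmetric bilinear form on H⁰ ≅ W*. Then L := {(X + π♯(α), ι_X ω + α) : X ∈ H, α ∈ H⁰} is a maximal isotropic subspace of V ⊕ V* satisfying (W ⊕ W⁰) ∩ L = {0}. Here ι_X ω is extended to an element of V* via the annihilator identification H* ≅ W⁰, and π♯(α) ∈ W via W ≅ (H⁰)*. -/

import Mathlib

open Module

noncomputable def pairPlus {V : Type*} [AddCommGroup V] [Module ℝ V]
    (p q : V × Module.Dual ℝ V) : ℝ :=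
  (1 / 2) * (p.2 q.1 + q.2 p.1)

def IsIsotropicP {V : Type*} [AddCommGroup V] [Module ℝ V]
    (L : Submodule ℝ (V × Module.Dual ℝ V)) : Prop :=
  ∀ p ∈ L, ∀ q ∈ L, pairPlus p q = 0

def IsMaxIsotropicP {V : Type*} [AddCommGroup V] [Module ℝ V]
    (L : Submodule ℝ (V × Module.Dual ℝ V)) : Prop :=
  IsIsotropicP L ∧ ∀ L' : Submodule ℝ (V × Module.Dual ℝ V),
    IsIsotropicP L' → L ≤ L' → L = L'

/-- The horizontal space `H = {X ∈ V : ∃ α ∈ W⁰, (X,α) ∈ L}` associated with a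
subspace `L ⊆ V ⊕ V*` and a subspace `W ⊆ V`. -/
def horizSub {V : Type*} [AddCommGroup V] [Module ℝ V]
    (L : Submodule ℝ (V × Module.Dual ℝ V)) (W : Submodule ℝ V) :
    Submodule ℝ V where
  carrier := {X | ∃ α ∈ W.dualAnnihilator, (X, α) ∈ L}
  add_mem' := by
    rintro a b ⟨α, hα, hαL⟩ ⟨β, hβ, hβL⟩
    exact ⟨α + β, Submodule.add_mem _ hα hβ, L.add_mem hαL hβL⟩
  zero_mem' := ⟨0, Submodule.zero_mem _, L.zero_mem⟩
  smul_mem' := by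
    rintro c a ⟨α, hα, hαL⟩
    exact ⟨c • α, Submodule.smul_mem _ _ hα, L.smul_mem c hαL⟩

/-- Given a splitting `V = H ⊕ W`, a skew form `ω` (the horizontal 2-form,
extended so that `ι_X ω ∈ W⁰`, i.e. `ω(·, w) = 0` for `w ∈ W`) and a skew
bivector `π` (the vertical bivector, extended so that it vanishes on `W⁰`),
the set `L = {(X + π♯(α), ι_X ω + α) : X ∈ H, α ∈ H⁰}` is a maximal isotropic
subspace of `V ⊕ V*` with `(W ⊕ W⁰) ∩ L = 0`; moreover `π♯(α) ∈ W` for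
`α ∈ H⁰` and `ι_X ω ∈ W⁰`. -/
theorem geometric_data_gives_maxIsotropic
    {V : Type*} [AddCommGroup V] [Module ℝ V] [FiniteDimensional ℝ V]
    (H W : Submodule ℝ V) (hHW : IsCompl H W)
    (ω : V →ₗ[ℝ] V →ₗ[ℝ] ℝ) (hωskew : ∀ x y, ω x y = -ω y x)
    (hωW : ∀ x : V, ∀ w ∈ W, ω x w = 0)
    (π : Module.Dual ℝ V →ₗ[ℝ] Module.Dual ℝ V →ₗ[ℝ] ℝ)
    (hπskew : ∀ a b, π a b = -π b a)
    (hπW : ∀ a : Module.Dual ℝ V, ∀ b ∈ W.dualAnnihilator, π a b = 0) :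
    ∃ L : Submodule ℝ (V × Module.Dual ℝ V),
      ((L : Set (V × Module.Dual ℝ V)) =
        {p | ∃ X ∈ H, ∃ α ∈ H.dualAnnihilator,
          p = (X + (Module.evalEquiv ℝ V).symm (π α), ω X + α)}) ∧
      (∀ α ∈ H.dualAnnihilator, (Module.evalEquiv ℝ V).symm (π α) ∈ W) ∧
      (∀ X : V, ω X ∈ W.dualAnnihilator) ∧
      IsMaxIsotropicP L ∧
      W.prod W.dualAnnihilator ⊓ L = ⊥ := by
  classical
  have key : ∀ (α β : Module.Dual ℝ V), β ((Module.evalEquiv ℝ V).symm (π α)) = π α β :=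
    fun α β => Module.apply_evalEquiv_symm_apply ℝ V β (π α)
  -- π♯ lands in W
  have hπsharp : ∀ α : Module.Dual ℝ V, (Module.evalEquiv ℝ V).symm (π α) ∈ W := by
    intro α
    rw [← Subspace.dualAnnihilator_dualCoannihilator_eq (W := W),
      Submodule.mem_dualCoannihilator]
    intro φ hφ
    rw [key]
    exact hπW α φ hφ
  have hωmem : ∀ X : V, ω X ∈ W.dualAnnihilator := by
    intro X
    rw [Submodule.mem_dualAnnihilator]
    exact hωW X
  -- the linear map (X, α) ↦ (X + π♯ α, ω X + α)
  set F : V × Module.Dual ℝ V →ₗ[ℝ] V × Module.Dual ℝ V :=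
    LinearMap.prod
      (LinearMap.fst ℝ V (Module.Dual ℝ V) +
        (Module.evalEquiv ℝ V).symm.toLinearMap ∘ₗ π ∘ₗ LinearMap.snd ℝ V (Module.Dual ℝ V))
      (ω ∘ₗ LinearMap.fst ℝ V (Module.Dual ℝ V) + LinearMap.snd ℝ V (Module.Dual ℝ V))
    with hFdef
  have hFapp : ∀ X α, F (X, α) = (X + (Module.evalEquiv ℝ V).symm (π α), ω X + α) := by
    intro X α; simp [hFdef]
  set L : Submodule ℝ (V × Module.Dual ℝ V) :=
    Submodule.map F (H.prod H.dualAnnihilator) with hLdef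
  have hmem : ∀ p : V × Module.Dual ℝ V, p ∈ L ↔
      ∃ X ∈ H, ∃ α ∈ H.dualAnnihilator,
        p = (X + (Module.evalEquiv ℝ V).symm (π α), ω X + α) := by
    intro p
    constructor
    · rintro ⟨⟨X, α⟩, ⟨hX, hα⟩, rfl⟩
      exact ⟨X, hX, α, hα, (hFapp X α).symm⟩
    · rintro ⟨X, hX, α, hα, rfl⟩
      exact ⟨(X, α), ⟨hX, hα⟩, hFapp X α⟩
  -- isotropy of L
  have hiso : IsIsotropicP L := by
    rintro p hp q hq
    obtain ⟨X, hX, α, hα, rfl⟩ := (hmem p).1 hp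
    obtain ⟨Y, hY, β, hβ, rfl⟩ := (hmem q).1 hq
    have hαY : α Y = 0 := (Submodule.mem_dualAnnihilator α).1 hα Y hY
    have hβX : β X = 0 := (Submodule.mem_dualAnnihilator β).1 hβ X hX
    have h1 : π β (ω X) = 0 := hπW β _ (hωmem X)
    have h2 : π α (ω Y) = 0 := hπW α _ (hωmem Y)
    simp only [pairPlus, LinearMap.add_apply, map_add, key, h1, h2, hαY, hβX]
    rw [hωskew X Y, hπskew β α]
    ring
  refine ⟨L, ?_, fun α _ => hπsharp α, hωmem, ⟨hiso, ?_⟩, ?_⟩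
  · ext p; exact hmem p
  · -- maximality
    intro L' hL' hle
    refine le_antisymm hle fun q hq => ?_
    obtain ⟨Y, β⟩ := q
    obtain ⟨Yh, Yw, hYh, hYw, hYsum⟩ := Submodule.codisjoint_iff_exists_add_eq.mp
      hHW.codisjoint Y
    obtain ⟨βH, βW, hβH, hβW, hβsum⟩ := Submodule.codisjoint_iff_exists_add_eq.mp
      (Subspace.isCompl_dualAnnihilator hHW).codisjoint β
    have hp0L : F (Yh, βH) ∈ L := ⟨(Yh, βH), ⟨hYh, hβH⟩, rfl⟩
    set r : V × Module.Dual ℝ V := (Y, β) - F (Yh, βH) with hrdef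
    have hrL' : r ∈ L' := Submodule.sub_mem _ hq (hle hp0L)
    have hr1 : r.1 = Yw - (Module.evalEquiv ℝ V).symm (π βH) := by
      simp only [hrdef, hFapp, Prod.fst_sub, ← hYsum]; abel
    have hr2 : r.2 = βW - ω Yh := by
      simp only [hrdef, hFapp, Prod.snd_sub, ← hβsum]; abel
    have hr1W : r.1 ∈ W := by
      rw [hr1]; exact Submodule.sub_mem _ hYw (hπsharp βH)
    have hr2W : r.2 ∈ W.dualAnnihilator := by
      rw [hr2]; exact Submodule.sub_mem _ hβW (hωmem Yh)
    -- r.2 kills H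
    have hγ0 : r.2 = 0 := by
      have hH : ∀ X ∈ H, r.2 X = 0 := by
        intro X hX
        have hXL : F (X, 0) ∈ L := ⟨(X, 0), ⟨hX, Submodule.zero_mem _⟩, rfl⟩
        have := hL' r hrL' _ (hle hXL)
        have hw : ω X r.1 = 0 := hωW X _ hr1W
        have he0 : (Module.evalEquiv ℝ V).symm (π 0) = 0 := by
          rw [show (π 0 : Module.Dual ℝ (Module.Dual ℝ V)) = 0 from map_zero π]
          exact LinearEquiv.map_zero _
        rw [hFapp X 0] at this
        simp only [pairPlus, he0, add_zero, hw, LinearMap.add_apply,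
          LinearMap.zero_apply] at this
        linarith
      have : r.2 ∈ H.dualAnnihilator ⊓ W.dualAnnihilator :=
        ⟨(Submodule.mem_dualAnnihilator _).2 hH, hr2W⟩
      rwa [← Submodule.dualAnnihilator_sup_eq, hHW.codisjoint.eq_top,
        Submodule.dualAnnihilator_top, Submodule.mem_bot] at this
    have hw0 : r.1 = 0 := by
      have hH0 : ∀ α ∈ H.dualAnnihilator, α r.1 = 0 := by
        intro α hα
        have hαL : F (0, α) ∈ L := ⟨(0, α), ⟨Submodule.zero_mem _, hα⟩, rfl⟩
        have := hL' r hrL' _ (hle hαL)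
        rw [hFapp 0 α] at this
        have hω0 : ω 0 = 0 := map_zero ω
        simp only [pairPlus, hω0, zero_add, hγ0, zero_add,
          LinearMap.zero_apply, LinearMap.add_apply] at this
        linarith
      have h1 : r.1 ∈ H := by
        rw [← Subspace.dualAnnihilator_dualCoannihilator_eq (W := H),
          Submodule.mem_dualCoannihilator]
        exact hH0
      have := hHW.disjoint
      rw [Submodule.disjoint_def] at this
      exact this r.1 h1 hr1W
    have hr0 : r = 0 := Prod.ext hw0 hγ0
    have : (Y, β) = F (Yh, βH) := by
      have := sub_eq_zero.mp (by rw [← hrdef]; exact hr0)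
      exact this
    rw [this]; exact hp0L
  · -- trivial intersection
    rw [eq_bot_iff]
    rintro ⟨v, δ⟩ ⟨⟨hv, hδ⟩, hL⟩
    obtain ⟨X, hX, α, hα, heq⟩ := (hmem (v, δ)).1 hL
    have h1 : v = X + (Module.evalEquiv ℝ V).symm (π α) := congrArg Prod.fst heq
    have h2 : δ = ω X + α := congrArg Prod.snd heq
    have hXW : X ∈ W := by
      have : X = v - (Module.evalEquiv ℝ V).symm (π α) := by rw [h1]; abel
      rw [this]; exact Submodule.sub_mem _ hv (hπsharp α)
    have hX0 : X = 0 := by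
      have := hHW.disjoint
      rw [Submodule.disjoint_def] at this
      exact this X hX hXW
    have hαW : α ∈ H.dualAnnihilator ⊓ W.dualAnnihilator := by
      refine ⟨hα, ?_⟩
      have : α = δ - ω X := by rw [h2]; abel
      rw [this]; exact Submodule.sub_mem _ hδ (hωmem X)
    rw [← Submodule.dualAnnihilator_sup_eq, hHW.codisjoint.eq_top,
      Submodule.dualAnnihilator_top, Submodule.mem_bot] at hαW
    rw [Submodule.mem_bot, Prod.ext_iff]
    constructor
    · show v = 0
      rw [h1, hX0, hαW, show (π 0 : Module.Dual ℝ (Module.Dual ℝ V)) = 0 from map_zero π,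
        LinearEquiv.map_zero, add_zero]
    · show δ = 0
      rw [h2, hX0, hαW, show (ω 0 : Module.Dual ℝ V) = 0 from map_zero ω, add_zero]
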